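/- arXiv:1601.01441 — 2 statements merged into one kernel-verified Lean document; each statement's English description precedes it below -/
import Mathlib

section
/- (Sobolev inequality for Sobolev-Fourier-Lorentz spaces.) Let $1 < q \leq \tilde q < \infty$, $s, \tilde s \in \mathbb{R}$ with $s - \frac{d}{q} = \tilde s - \frac{d}{\tilde q}$, and $1 \leq r \leq \infty$. Then there is a constant $C$ such that $\|u\|_{\dot H^{\tilde s}_{\mathcal{L}^{\tilde q, r}}} \leq C \|u\|_{\dot H^{s}_{\mathcal{L}^{q,r}}}$ for all $u \in \dot H^{s}_{\mathcal{L}^{q,r}}(\mathbb{R}^d)$. -/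
open MeasureTheory ENNReal Filter
open scoped FourierTransform ENNReal NNReal

noncomputable section

/-- The decreasing rearrangement of `f` with respect to the measure `μ`. -/
def rearr {α : Type*} [MeasurableSpace α] (μ : Measure α) (f : α → ℝ≥0∞) (t : ℝ) : ℝ≥0∞ :=
  sInf {τ : ℝ≥0∞ | μ {x | τ < f x} ≤ ENNReal.ofReal t}

/-- The Lorentz `L^{p,r}` (quasi-)norm, defined via the decreasing rearrangement. -/
def lorentzNorm {α : Type*} [MeasurableSpace α] (μ : Measure α) (f : α → ℝ≥0∞)
    (p r : ℝ≥0∞) : ℝ≥0∞ :=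
  if r = ∞ then ⨆ t ∈ Set.Ioi (0:ℝ), ENNReal.ofReal t ^ (1/p).toReal * rearr μ f t
  else (∫⁻ t in Set.Ioi (0:ℝ),
      (ENNReal.ofReal t ^ (1/p).toReal * rearr μ f t) ^ r.toReal / ENNReal.ofReal t)
    ^ (1/r.toReal)

/-- The conjugate exponent `p'` with `1/p + 1/p' = 1`. -/
def dualExp (p : ℝ≥0∞) : ℝ≥0∞ := (1 - 1/p)⁻¹

abbrev Esp (d : ℕ) := EuclideanSpace ℝ (Fin d)

/-- Fourier-side Sobolev-Fourier-Lorentz norm: the Lorentz `L^{p',r}` norm of `|ξ|^s g(ξ)`. -/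
def sflNorm (d : ℕ) (s : ℝ) (p r : ℝ≥0∞) (g : Esp d → ℂ) : ℝ≥0∞ :=
  lorentzNorm volume (fun ξ => ENNReal.ofReal (‖ξ‖ ^ s) * ‖g ξ‖₊) (dualExp p) r

/-- The Sobolev-Fourier-Lorentz norm `‖u‖_{Ḣ^s_{𝓛^{p,r}}} = ‖|ξ|^s û(ξ)‖_{L^{p',r}}`. -/
def HsL (d : ℕ) (s : ℝ) (p r : ℝ≥0∞) (f : Esp d → ℂ) : ℝ≥0∞ :=
  sflNorm d s p r (𝓕 f)

/-- The Fourier-Lorentz norm `‖f‖_{𝓛^{p,r}} = ‖f̂‖_{L^{p',r}}`. -/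
def FLnorm (d : ℕ) (p r : ℝ≥0∞) (f : Esp d → ℂ) : ℝ≥0∞ :=
  lorentzNorm volume (fun ξ => (‖𝓕 f ξ‖₊ : ℝ≥0∞)) (dualExp p) r

end

section AuxRearr

variable {α : Type*} [MeasurableSpace α] {μ : Measure α} {f g : α → ℝ≥0∞}

lemma rearr_le (τ : ℝ≥0∞) {t : ℝ} (h : μ {x | τ < f x} ≤ ENNReal.ofReal t) :
    rearr μ f t ≤ τ := sInf_le h

lemma measure_le_of_lt_rearr {t : ℝ} {τ : ℝ≥0∞} (h : rearr μ f t < τ) :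
    μ {x | τ < f x} ≤ ENNReal.ofReal t := by
  obtain ⟨σ, hσ, hστ⟩ := sInf_lt_iff.mp h
  exact le_trans (measure_mono fun x hx => lt_trans hστ hx) hσ

lemma rearr_mono_ae {t : ℝ} (h : f ≤ᵐ[μ] g) : rearr μ f t ≤ rearr μ g t := by
  refine sInf_le_sInf fun τ hτ => ?_
  refine le_trans (measure_mono_ae ?_) hτ
  filter_upwards [h] with x hx hx2
  exact lt_of_lt_of_le hx2 hx

lemma rearr_mul_le {t u : ℝ} (ht : 0 ≤ t) (hu : 0 ≤ u) {σ : ℝ≥0∞}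
    (hσ0 : σ ≠ 0) (hσtop : σ ≠ ∞) (hf : μ {x | σ < f x} ≤ ENNReal.ofReal t) :
    rearr μ (fun x => f x * g x) (t + u) ≤ σ * rearr μ g u := by
  have key : ∀ τ : ℝ≥0∞, rearr μ g u < τ →
      rearr μ (fun x => f x * g x) (t + u) ≤ σ * τ := by
    intro τ hτ
    refine rearr_le _ ?_
    have hsub : {x | σ * τ < f x * g x} ⊆ {x | σ < f x} ∪ {x | τ < g x} := by
      intro x hx
      by_contra hc
      simp only [Set.mem_union, Set.mem_setOf_eq, not_or, not_lt] at hc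
      exact absurd (mul_le_mul' hc.1 hc.2) (not_le.mpr hx)
    calc μ {x | σ * τ < f x * g x} ≤ μ ({x | σ < f x} ∪ {x | τ < g x}) := measure_mono hsub
      _ ≤ μ {x | σ < f x} + μ {x | τ < g x} := measure_union_le _ _
      _ ≤ ENNReal.ofReal t + ENNReal.ofReal u := add_le_add hf (measure_le_of_lt_rearr hτ)
      _ = ENNReal.ofReal (t + u) := (ENNReal.ofReal_add ht hu).symm
  rcases eq_top_or_lt_top (rearr μ g u) with htop | hlt
  · rw [htop, ENNReal.mul_top hσ0]; exact le_top
  · refine ENNReal.le_of_forall_pos_le_add fun ε hε _ => ?_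
    have hd0 : (ε : ℝ≥0∞) / σ ≠ 0 := by
      simp [ENNReal.div_eq_zero_iff, hσtop, hε.ne']
    have hτ : rearr μ g u < rearr μ g u + (ε : ℝ≥0∞) / σ :=
      ENNReal.lt_add_right hlt.ne hd0
    refine (key _ hτ).trans ?_
    rw [mul_add, mul_comm σ ((ε : ℝ≥0∞) / σ), ENNReal.div_mul_cancel hσ0 hσtop]

lemma lintegral_Ioi_half (φ : ℝ → ℝ≥0∞) :
    ∫⁻ t in Set.Ioi (0:ℝ), φ (t/2) = 2 * ∫⁻ t in Set.Ioi (0:ℝ), φ t := by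
  have hemb : MeasurableEmbedding (fun t : ℝ => t / 2) := by
    have h : (fun t : ℝ => t / 2) = fun t : ℝ => (2⁻¹ : ℝ) * t := by
      funext t; ring
    rw [h]
    exact (MeasurableEquiv.mulLeft₀ (2⁻¹ : ℝ) (by norm_num)).measurableEmbedding
  have h1 : ∫⁻ t in Set.Ioi (0:ℝ), φ (t/2)
      = ∫⁻ y, φ y ∂(Measure.map (fun t : ℝ => t / 2) (volume.restrict (Set.Ioi 0))) :=
    (hemb.lintegral_map φ).symm
  rw [h1]
  have hpre : (fun t : ℝ => t / 2) ⁻¹' (Set.Ioi 0) = Set.Ioi 0 := by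
    ext x; simp [Set.mem_Ioi]
  have h2 : Measure.map (fun t : ℝ => t / 2) (volume.restrict (Set.Ioi 0))
      = (Measure.map (fun t : ℝ => t / 2) volume).restrict (Set.Ioi 0) := by
    rw [Measure.restrict_map hemb.measurable measurableSet_Ioi, hpre]
  have h3 : Measure.map (fun t : ℝ => t / 2) volume = (2 : ℝ≥0∞) • volume := by
    have h : (fun t : ℝ => t / 2) = fun t : ℝ => (2⁻¹ : ℝ) * t := by funext t; ring
    rw [h, Real.map_volume_mul_left (by norm_num : (2⁻¹:ℝ) ≠ 0)]
    norm_num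
  rw [h2, h3, Measure.restrict_smul, lintegral_smul_measure, smul_eq_mul]

lemma dualExp_toReal {p : ℝ≥0∞} (hp1 : 1 < p) :
    (1 / dualExp p).toReal = 1 - 1 / p.toReal := by
  rw [dualExp, one_div, inv_inv, one_div, ENNReal.toReal_sub_of_le
    (ENNReal.inv_le_one.mpr hp1.le) one_ne_top, ENNReal.toReal_inv, ENNReal.toReal_one, one_div]

end AuxRearr

/-- Sobolev inequality for Sobolev-Fourier-Lorentz spaces: if `1 < q ≤ q̃ < ∞`,
`s - d/q = s̃ - d/q̃` and `1 ≤ r ≤ ∞`, then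
`‖u‖_{Ḣ^{s̃}_{𝓛^{q̃,r}}} ≤ C ‖u‖_{Ḣ^{s}_{𝓛^{q,r}}}`. -/
theorem sobolev_fourier_lorentz (d : ℕ) (q qt : ℝ≥0∞) (s st : ℝ) (r : ℝ≥0∞)
    (hq1 : 1 < q) (hqqt : q ≤ qt) (hqt : qt < ∞) (hr : 1 ≤ r)
    (hreg : s - ((d : ℝ≥0∞) / q).toReal = st - ((d : ℝ≥0∞) / qt).toReal) :
    ∃ C : ℝ≥0∞, 0 < C ∧ C < ∞ ∧ ∀ u : Esp d → ℂ,
      HsL d s q r u < ∞ → HsL d st qt r u ≤ C * HsL d s q r u := by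
  have hqtop : q ≠ ∞ := (lt_of_le_of_lt hqqt hqt).ne
  have hqttop : qt ≠ ∞ := hqt.ne
  have hq1t : 1 < qt := lt_of_lt_of_le hq1 hqqt
  have hβq := dualExp_toReal hq1
  have hβqt := dualExp_toReal hq1t
  have hqr1 : 1 < q.toReal := by
    rw [← ENNReal.toReal_one]; exact (ENNReal.toReal_lt_toReal one_ne_top hqtop).mpr hq1
  have hqtr1 : 1 < qt.toReal := by
    rw [← ENNReal.toReal_one]; exact (ENNReal.toReal_lt_toReal one_ne_top hqttop).mpr hq1t
  have hqle : q.toReal ≤ qt.toReal := ENNReal.toReal_mono hqttop hqqt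
  have hdq : ((d : ℝ≥0∞) / q).toReal = d / q.toReal := by
    rw [ENNReal.toReal_div, ENNReal.toReal_natCast]
  have hdqt : ((d : ℝ≥0∞) / qt).toReal = d / qt.toReal := by
    rw [ENNReal.toReal_div, ENNReal.toReal_natCast]
  rw [hdq, hdqt] at hreg
  have hr0 : r ≠ 0 := (zero_lt_one.trans_le hr).ne'
  by_cases hd : d = 0
  · -- dimension 0 : the regularity condition forces `s = st`
    subst hd
    have hsst : s = st := by simpa using hreg
    subst hsst
    refine ⟨1, zero_lt_one, one_lt_top, fun u _ => ?_⟩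
    rw [one_mul]
    have hvol : (volume : Measure (Esp 0)) Set.univ = 1 := by
      have h := (EuclideanSpace.volume_preserving_symm_measurableEquiv_toLp (Fin 0)).measure_preimage
        (MeasurableSet.univ (α := Fin 0 → ℝ))
      simp only [Set.preimage_univ] at h
      rw [h]
      simp [MeasureTheory.volume_pi, Measure.pi_univ]
    set F : Esp 0 → ℝ≥0∞ := fun ξ => ENNReal.ofReal (‖ξ‖ ^ s) * ‖𝓕 u ξ‖₊ with hF
    have hF0 : ∀ t : ℝ, 1 ≤ t → rearr volume F t = 0 := by
      intro t ht
      refine le_antisymm (rearr_le 0 ?_) (zero_le)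
      calc volume {x | 0 < F x} ≤ volume Set.univ := measure_mono (Set.subset_univ _)
        _ = 1 := hvol
        _ ≤ ENNReal.ofReal t := by
            rw [← ENNReal.ofReal_one]; exact ENNReal.ofReal_le_ofReal ht
    have hterm : ∀ t ∈ Set.Ioi (0:ℝ),
        ENNReal.ofReal t ^ (1/dualExp qt).toReal * rearr volume F t
          ≤ ENNReal.ofReal t ^ (1/dualExp q).toReal * rearr volume F t := by
      intro t ht
      rcases le_or_gt t 1 with h1 | h1
      · refine mul_le_mul_left ?_ _
        rw [hβq, hβqt]
        refine ENNReal.rpow_le_rpow_of_exponent_ge (ENNReal.ofReal_le_one.mpr h1) ?_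
        have h2 : 1/qt.toReal ≤ 1/q.toReal :=
          one_div_le_one_div_of_le (by linarith) hqle
        linarith
      · rw [hF0 t h1.le, mul_zero, mul_zero]
    show lorentzNorm volume F (dualExp qt) r ≤ lorentzNorm volume F (dualExp q) r
    rw [lorentzNorm, lorentzNorm]
    split_ifs with hrinf
    · exact iSup₂_le fun t ht => le_trans (hterm t ht) (le_biSup (fun t => ENNReal.ofReal t ^ (1 / dualExp q).toReal * rearr volume F t) ht)
    · refine ENNReal.rpow_le_rpow ?_ (by positivity)
      refine lintegral_mono_ae ?_
      filter_upwards [self_mem_ae_restrict measurableSet_Ioi] with t ht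
      exact ENNReal.div_le_div_right
        (ENNReal.rpow_le_rpow (hterm t ht) ENNReal.toReal_nonneg) _
  · by_cases hqq : q = qt
    · subst hqq
      have hsst : s = st := by linarith
      subst hsst
      exact ⟨1, zero_lt_one, one_lt_top, fun u _ => by rw [one_mul]⟩
    · -- main case : `d ≠ 0`, `q < qt`
      have hlt : q < qt := lt_of_le_of_ne hqqt hqq
      have hqrlt : q.toReal < qt.toReal := ENNReal.toReal_strict_mono hqttop hlt
      have hdne : (d:ℝ) ≠ 0 := Nat.cast_ne_zero.mpr hd
      have hd0 : (0:ℝ) < d := by positivity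
      set a : ℝ := (d:ℝ)/q.toReal - (d:ℝ)/qt.toReal with haa
      have ha : 0 < a := by
        have h : (d:ℝ)/qt.toReal < (d:ℝ)/q.toReal :=
          div_lt_div_of_pos_left hd0 (by linarith) hqrlt
        rw [haa]; linarith
      have hsst : s - st = a := by rw [haa]; linarith
      set β : ℝ := 1 - 1/q.toReal with hβdef
      set βt : ℝ := 1 - 1/qt.toReal with hβtdef
      have hβ' : (1/dualExp q).toReal = β := by rw [hβq, hβdef]
      have hβt' : (1/dualExp qt).toReal = βt := by rw [hβqt, hβtdef]
      have hβpos : 0 < β := by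
        rw [hβdef]
        have h1q : 1/q.toReal < 1 := by
          rw [div_lt_one (by linarith)]
          linarith
        linarith
      have hkey : βt - a/(d:ℝ) = β := by
        rw [hβtdef, hβdef, haa]
        field_simp
        ring
      haveI : Nonempty (Fin d) := ⟨⟨0, Nat.pos_of_ne_zero hd⟩⟩
      set m : ℝ := (volume (Metric.ball (0:Esp d) 1)).toReal with hmdef
      have hmpos : 0 < m := ENNReal.toReal_pos
        (Metric.measure_ball_pos volume _ one_pos).ne' measure_ball_lt_top.ne
      have hmeq : volume (Metric.ball (0:Esp d) 1) = ENNReal.ofReal m :=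
        (ENNReal.ofReal_toReal measure_ball_lt_top.ne).symm
      set C0 : ℝ≥0∞ := ENNReal.ofReal ((2*m)^(a/(d:ℝ)) * 2^β) with hC0
      have hC0pos : 0 < C0 := by
        rw [hC0]; apply ENNReal.ofReal_pos.mpr; positivity
      have hC0top : C0 ≠ ∞ := by rw [hC0]; exact ENNReal.ofReal_ne_top
      refine ⟨C0, hC0pos, hC0top.lt_top, fun u _ => ?_⟩
      set G : Esp d → ℝ≥0∞ := fun ξ => ENNReal.ofReal (‖ξ‖ ^ st) * ‖𝓕 u ξ‖₊ with hG
      set F : Esp d → ℝ≥0∞ := fun ξ => ENNReal.ofReal (‖ξ‖ ^ s) * ‖𝓕 u ξ‖₊ with hF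
      -- a.e. pointwise factorization of the symbol
      have hae : G ≤ᵐ[volume] fun ξ => ENNReal.ofReal (‖ξ‖ ^ (-a)) * F ξ := by
        have hzero : volume ({0} : Set (Esp d)) = 0 := measure_singleton 0
        filter_upwards [measure_eq_zero_iff_ae_notMem.mp hzero] with ξ hξ
        have hn : 0 < ‖ξ‖ := by
          simpa [norm_pos_iff] using hξ
        simp only [hG, hF]
        rw [← mul_assoc, ← ENNReal.ofReal_mul (Real.rpow_nonneg (norm_nonneg _) _),
          ← Real.rpow_add hn, show -a + s = st by linarith]
      -- the basic pointwise estimate between the two weighted rearrangements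
      have hAB : ∀ t : ℝ, 0 < t →
          ENNReal.ofReal t ^ βt * rearr volume G t
            ≤ C0 * (ENNReal.ofReal (t/2) ^ β * rearr volume F (t/2)) := by
        intro t ht
        have ht2 : 0 < t/2 := half_pos ht
        set ρ : ℝ := (t/(2*m)) ^ (1/(d:ℝ)) with hρdef
        have htm : 0 < t/(2*m) := by positivity
        have hρ : 0 < ρ := Real.rpow_pos_of_pos htm _
        set σ : ℝ≥0∞ := ENNReal.ofReal (ρ ^ (-a)) with hσdef
        have hσ0 : σ ≠ 0 := (ENNReal.ofReal_pos.mpr (Real.rpow_pos_of_pos hρ _)).ne'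
        have hσtop : σ ≠ ∞ := ENNReal.ofReal_ne_top
        have hsub : {ξ : Esp d | σ < ENNReal.ofReal (‖ξ‖ ^ (-a))} ⊆ Metric.ball (0:Esp d) ρ := by
          intro ξ hξ
          simp only [Set.mem_setOf_eq, hσdef] at hξ
          have h1 : ρ ^ (-a) < ‖ξ‖ ^ (-a) := by
            by_contra hcon
            push_neg at hcon
            exact absurd (ENNReal.ofReal_le_ofReal hcon) (not_le.mpr hξ)
          have hξ0 : 0 < ‖ξ‖ := by
            rcases lt_or_eq_of_le (norm_nonneg ξ) with h | h
            · exact h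
            · exfalso
              rw [← h, Real.zero_rpow (neg_ne_zero.mpr ha.ne')] at h1
              exact absurd h1 (not_lt.mpr (Real.rpow_nonneg hρ.le _))
          rw [Real.rpow_neg hρ.le, Real.rpow_neg (norm_nonneg ξ)] at h1
          have h2 : ‖ξ‖ ^ a < ρ ^ a :=
            (inv_lt_inv₀ (Real.rpow_pos_of_pos hρ _) (Real.rpow_pos_of_pos hξ0 _)).mp h1
          have h3 : ‖ξ‖ < ρ := by
            by_contra hcon
            push_neg at hcon
            exact absurd h2 (not_lt.mpr (Real.rpow_le_rpow hρ.le hcon ha.le))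
          simpa [Metric.mem_ball, dist_zero_right] using h3
        have hρd : ρ ^ (d:ℕ) = t/(2*m) := by
          rw [hρdef, ← Real.rpow_natCast ((t/(2*m)) ^ (1/(d:ℝ))) d, ← Real.rpow_mul htm.le,
            one_div, inv_mul_cancel₀ hdne, Real.rpow_one]
        have hmeas : volume {ξ : Esp d | σ < ENNReal.ofReal (‖ξ‖ ^ (-a))}
            ≤ ENNReal.ofReal (t/2) := by
          refine (measure_mono hsub).trans ?_
          rw [Measure.addHaar_ball volume (0:Esp d) hρ.le, finrank_euclideanSpace_fin, hρd,
            hmeq, ← ENNReal.ofReal_mul htm.le]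
          apply le_of_eq
          congr 1
          field_simp
        have hσval : σ = ENNReal.ofReal ((2*m) ^ (a/(d:ℝ)))
            * ENNReal.ofReal (t ^ (-(a/(d:ℝ)))) := by
          rw [hσdef, ← ENNReal.ofReal_mul (by positivity)]
          congr 1
          rw [hρdef, ← Real.rpow_mul htm.le, show (1/(d:ℝ)) * (-a) = -(a/(d:ℝ)) by ring,
            Real.rpow_neg htm.le, Real.div_rpow ht.le (by positivity : (0:ℝ) ≤ 2*m),
            inv_div, div_eq_mul_inv, ← Real.rpow_neg ht.le]
        have hstep := rearr_mul_le (μ := volume)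
          (f := fun ξ : Esp d => ENNReal.ofReal (‖ξ‖ ^ (-a))) (g := F)
          ht2.le ht2.le hσ0 hσtop hmeas
        rw [show t/2 + t/2 = t by ring] at hstep
        have hGt : rearr volume G t ≤ σ * rearr volume F (t/2) :=
          (rearr_mono_ae hae).trans hstep
        have hscal : ENNReal.ofReal t ^ βt * σ = C0 * ENNReal.ofReal (t/2) ^ β := by
          rw [ENNReal.ofReal_rpow_of_pos ht, ENNReal.ofReal_rpow_of_pos ht2, hσval, hC0,
            ← ENNReal.ofReal_mul (by positivity), ← ENNReal.ofReal_mul (by positivity),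
            ← ENNReal.ofReal_mul (by positivity)]
          congr 1
          have h2β : (0:ℝ) < 2 ^ β := Real.rpow_pos_of_pos two_pos β
          have e2 : t ^ βt * t ^ (-(a/(d:ℝ))) = t ^ β := by
            rw [← Real.rpow_add ht, show βt + -(a/(d:ℝ)) = β by linarith]
          have e1 : ((t/2:ℝ)) ^ β = t ^ β / 2 ^ β := Real.div_rpow ht.le (by norm_num : (0:ℝ) ≤ 2) β
          rw [e1, ← e2]
          field_simp
        calc ENNReal.ofReal t ^ βt * rearr volume G t
            ≤ ENNReal.ofReal t ^ βt * (σ * rearr volume F (t/2)) := mul_le_mul_right hGt _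
          _ = C0 * (ENNReal.ofReal (t/2) ^ β * rearr volume F (t/2)) := by
              rw [← mul_assoc, hscal, mul_assoc]
      -- conclusion : compare the two Lorentz norms
      show lorentzNorm volume G (dualExp qt) r ≤ C0 * lorentzNorm volume F (dualExp q) r
      rw [lorentzNorm, lorentzNorm, hβ', hβt']
      split_ifs with hrinf
      · refine iSup₂_le fun t ht => ?_
        have ht' : (0:ℝ) < t := ht
        refine (hAB t ht').trans (mul_le_mul_right ?_ C0)
        exact le_biSup (fun τ : ℝ => ENNReal.ofReal τ ^ β * rearr volume F τ) (Set.mem_Ioi.mpr (half_pos ht'))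
      · have hrrpos : 0 < r.toReal := ENNReal.toReal_pos hr0 hrinf
        have hint : (∫⁻ t in Set.Ioi (0:ℝ),
              (ENNReal.ofReal t ^ βt * rearr volume G t) ^ r.toReal / ENNReal.ofReal t)
            ≤ C0 ^ r.toReal * ∫⁻ t in Set.Ioi (0:ℝ),
              (ENNReal.ofReal t ^ β * rearr volume F t) ^ r.toReal / ENNReal.ofReal t := by
          have hb : ∀ᵐ t ∂(volume.restrict (Set.Ioi (0:ℝ))),
              (ENNReal.ofReal t ^ βt * rearr volume G t) ^ r.toReal / ENNReal.ofReal t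
                ≤ (C0 ^ r.toReal / 2) *
                  ((ENNReal.ofReal (t/2) ^ β * rearr volume F (t/2)) ^ r.toReal
                    / ENNReal.ofReal (t/2)) := by
            filter_upwards [self_mem_ae_restrict measurableSet_Ioi] with t ht
            have ht' : (0:ℝ) < t := ht
            have h1 : (ENNReal.ofReal t ^ βt * rearr volume G t) ^ r.toReal
                ≤ C0 ^ r.toReal *
                  (ENNReal.ofReal (t/2) ^ β * rearr volume F (t/2)) ^ r.toReal := by
              rw [← ENNReal.mul_rpow_of_nonneg _ _ ENNReal.toReal_nonneg]
              exact ENNReal.rpow_le_rpow (hAB t ht') ENNReal.toReal_nonneg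
            have h2 : ENNReal.ofReal t = 2 * ENNReal.ofReal (t/2) := by
              rw [← ENNReal.ofReal_ofNat 2, ← ENNReal.ofReal_mul (by norm_num : (0:ℝ) ≤ 2)]
              congr 1
              ring
            calc (ENNReal.ofReal t ^ βt * rearr volume G t) ^ r.toReal / ENNReal.ofReal t
                ≤ (C0 ^ r.toReal *
                    (ENNReal.ofReal (t/2) ^ β * rearr volume F (t/2)) ^ r.toReal)
                  / ENNReal.ofReal t := ENNReal.div_le_div_right h1 _
              _ = (C0 ^ r.toReal / 2) *
                  ((ENNReal.ofReal (t/2) ^ β * rearr volume F (t/2)) ^ r.toReal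
                    / ENNReal.ofReal (t/2)) := by
                  have hinv : ((2:ℝ≥0∞) * ENNReal.ofReal (t/2))⁻¹
                      = 2⁻¹ * (ENNReal.ofReal (t/2))⁻¹ :=
                    ENNReal.mul_inv (Or.inl (by norm_num)) (Or.inl ENNReal.ofNat_ne_top)
                  rw [h2,
                    div_eq_mul_inv (C0 ^ r.toReal *
                      (ENNReal.ofReal (t/2) ^ β * rearr volume F (t/2)) ^ r.toReal)
                      (2 * ENNReal.ofReal (t/2)),
                    hinv, div_eq_mul_inv (C0 ^ r.toReal) 2,
                    div_eq_mul_inv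
                      ((ENNReal.ofReal (t/2) ^ β * rearr volume F (t/2)) ^ r.toReal)
                      (ENNReal.ofReal (t/2))]
                  ring
          have hC0fin : C0 ^ r.toReal / 2 ≠ ∞ :=
            (ENNReal.div_lt_top (ENNReal.rpow_ne_top_of_nonneg ENNReal.toReal_nonneg hC0top)
              (by norm_num)).ne
          calc (∫⁻ t in Set.Ioi (0:ℝ),
                (ENNReal.ofReal t ^ βt * rearr volume G t) ^ r.toReal / ENNReal.ofReal t)
              ≤ ∫⁻ t in Set.Ioi (0:ℝ), (C0 ^ r.toReal / 2) *
                  ((ENNReal.ofReal (t/2) ^ β * rearr volume F (t/2)) ^ r.toReal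
                    / ENNReal.ofReal (t/2)) := lintegral_mono_ae hb
            _ = (C0 ^ r.toReal / 2) * ∫⁻ t in Set.Ioi (0:ℝ),
                  ((ENNReal.ofReal (t/2) ^ β * rearr volume F (t/2)) ^ r.toReal
                    / ENNReal.ofReal (t/2)) := lintegral_const_mul' _ _ hC0fin
            _ = (C0 ^ r.toReal / 2) * (2 * ∫⁻ t in Set.Ioi (0:ℝ),
                  ((ENNReal.ofReal t ^ β * rearr volume F t) ^ r.toReal
                    / ENNReal.ofReal t)) := by
                rw [lintegral_Ioi_half
                  (fun τ => (ENNReal.ofReal τ ^ β * rearr volume F τ) ^ r.toReal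
                    / ENNReal.ofReal τ)]
            _ = C0 ^ r.toReal * ∫⁻ t in Set.Ioi (0:ℝ),
                  ((ENNReal.ofReal t ^ β * rearr volume F t) ^ r.toReal
                    / ENNReal.ofReal t) := by
                rw [← mul_assoc, ENNReal.div_mul_cancel (by norm_num) ENNReal.ofNat_ne_top]
        calc (∫⁻ t in Set.Ioi (0:ℝ),
              (ENNReal.ofReal t ^ βt * rearr volume G t) ^ r.toReal / ENNReal.ofReal t)
                ^ (1/r.toReal)
            ≤ (C0 ^ r.toReal * ∫⁻ t in Set.Ioi (0:ℝ),
                (ENNReal.ofReal t ^ β * rearr volume F t) ^ r.toReal / ENNReal.ofReal t)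
                ^ (1/r.toReal) := ENNReal.rpow_le_rpow hint (by positivity)
          _ = C0 * (∫⁻ t in Set.Ioi (0:ℝ),
                (ENNReal.ofReal t ^ β * rearr volume F t) ^ r.toReal / ENNReal.ofReal t)
                ^ (1/r.toReal) := by
              rw [ENNReal.mul_rpow_of_nonneg _ _ (by positivity), ← ENNReal.rpow_mul,
                mul_one_div_cancel hrrpos.ne', ENNReal.rpow_one]
end

section
/- (Heat semigroup smoothing from $\dot H^{d/p-1}_{\mathcal{L}^{p,r}}$.) Let $1 < p \leq d$, $1 \leq r < \infty$, and $\tilde p$ with $\frac{1}{p} - \frac{1}{d} < \frac{1}{\tilde p} < \frac{1}{p}$, and set $\alpha = d(\frac{1}{p} - \frac{1}{\tilde p})$. Then there is a constant $C$ such that for all $u_0 \in \dot H^{\frac{d}{p}-1}_{\mathcal{L}^{p,r}}(\mathbb{R}^d)$, $\sup_{t > 0} t^{\alpha/2} \|e^{t\Delta} u_0\|_{\dot H^{\frac{d}{p}-1}_{\mathcal{L}^{\tilde p, 1}}} \leq C \|u_0\|_{\dot H^{\frac{d}{p}-1}_{\mathcal{L}^{p,r}}}$, and moreover $\lim_{t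 \to 0} t^{\alpha/2} \|e^{t\Delta} u_0\|_{\dot H^{\frac{d}{p}-1}_{\mathcal{L}^{\tilde p, 1}}} = 0$. -/
open MeasureTheory ENNReal Filter
open scoped FourierTransform ENNReal NNReal

/- ========== auxiliary lemmas ========== -/

noncomputable section

open Set Metric

namespace HeatAux

variable {α : Type*} [MeasurableSpace α] {μ : Measure α} {f g : α → ℝ≥0∞}

lemma rearr_anti : Antitone (rearr μ f) := by
  intro s t hst
  exact sInf_le_sInf (fun τ hτ => le_trans hτ (ENNReal.ofReal_le_ofReal hst))

lemma rearr_measurable : Measurable (rearr μ f) := rearr_anti.measurable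

lemma rearr_mono (h : ∀ x, f x ≤ g x) (t : ℝ) : rearr μ f t ≤ rearr μ g t := by
  refine sInf_le_sInf (fun τ hτ => ?_)
  exact le_trans (measure_mono (fun x hx => lt_of_lt_of_le hx (h x))) hτ

lemma rearr_le (t : ℝ) {τ : ℝ≥0∞} (h : μ {x | τ < f x} ≤ ENNReal.ofReal t) :
    rearr μ f t ≤ τ := sInf_le h

/-- the infimum in the definition of `rearr` is attained. -/
lemma rearr_mem (t : ℝ) (hne : {τ : ℝ≥0∞ | μ {x | τ < f x} ≤ ENNReal.ofReal t}.Nonempty) :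
    μ {x | rearr μ f t < f x} ≤ ENNReal.ofReal t := by
  set S := {τ : ℝ≥0∞ | μ {x | τ < f x} ≤ ENNReal.ofReal t} with hS
  obtain ⟨u, hu_anti, hu_tend, hu_mem⟩ := exists_seq_tendsto_sInf hne (OrderBot.bddBelow S)
  have hset : {x | sInf S < f x} = ⋃ n, {x | u n < f x} := by
    ext x
    simp only [Set.mem_setOf_eq, Set.mem_iUnion]
    constructor
    · intro hx
      have : ∀ᶠ n in atTop, u n < f x := hu_tend.eventually_lt_const hx
      exact this.exists
    · rintro ⟨n, hn⟩
      exact lt_of_le_of_lt (csInf_le (OrderBot.bddBelow S) (hu_mem n)) hn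
  have hmono : Monotone (fun n => {x | u n < f x}) := by
    intro m n hmn x hx
    exact lt_of_le_of_lt (hu_anti hmn) hx
  rw [rearr, hset, hmono.measure_iUnion]
  exact iSup_le fun n => hu_mem n

lemma rearr_empty_top (t : ℝ) (h : ¬ {τ : ℝ≥0∞ | μ {x | τ < f x} ≤ ENNReal.ofReal t}.Nonempty) :
    rearr μ f t = ∞ := by
  rw [rearr, Set.not_nonempty_iff_eq_empty.mp h, sInf_empty]

lemma rearr_mul_le (t : ℝ) (ht : 0 ≤ t) :
    rearr μ (fun x => f x * g x) (t + t) ≤ rearr μ f t * rearr μ g t := by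
  have key : ∀ a b : ℝ≥0∞, μ {x | a < f x} ≤ ENNReal.ofReal t →
      μ {x | b < g x} ≤ ENNReal.ofReal t →
      rearr μ (fun x => f x * g x) (t + t) ≤ a * b := by
    intro a b ha hb
    refine rearr_le _ ?_
    have hsub : {x | a * b < f x * g x} ⊆ {x | a < f x} ∪ {x | b < g x} := by
      intro x hx
      by_contra hc
      simp only [Set.mem_union, Set.mem_setOf_eq, not_or, not_lt] at hc
      exact absurd (mul_le_mul' hc.1 hc.2) (not_le_of_gt hx)
    calc μ {x | a * b < f x * g x} ≤ μ ({x | a < f x} ∪ {x | b < g x}) := measure_mono hsub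
      _ ≤ μ {x | a < f x} + μ {x | b < g x} := measure_union_le _ _
      _ ≤ ENNReal.ofReal t + ENNReal.ofReal t := add_le_add ha hb
      _ = ENNReal.ofReal (t + t) := (ENNReal.ofReal_add ht ht).symm
  by_cases hS : {τ : ℝ≥0∞ | μ {x | τ < f x} ≤ ENNReal.ofReal t}.Nonempty
  · by_cases hT : {τ : ℝ≥0∞ | μ {x | τ < g x} ≤ ENNReal.ofReal t}.Nonempty
    · exact key _ _ (rearr_mem t hS) (rearr_mem t hT)
    · rw [rearr_empty_top t hT]
      by_cases hf0 : rearr μ f t = 0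
      · rw [hf0, zero_mul]
        refine rearr_le _ ?_
        have h0 : μ {x | (0:ℝ≥0∞) < f x} ≤ ENNReal.ofReal t := by
          have := rearr_mem t hS; rwa [hf0] at this
        have hsub : {x | (0:ℝ≥0∞) < f x * g x} ⊆ {x | (0:ℝ≥0∞) < f x} := by
          intro x hx
          simp only [Set.mem_setOf_eq, pos_iff_ne_zero] at hx ⊢
          exact fun h => hx (by simp [h])
        exact le_trans (measure_mono hsub)
          (le_trans h0 (ENNReal.ofReal_le_ofReal (by linarith)))
      · rw [ENNReal.mul_top hf0]; exact le_top
  · rw [rearr_empty_top t hS]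
    by_cases hg0 : rearr μ g t = 0
    · rw [hg0, mul_zero]
      refine rearr_le _ ?_
      have hT : {τ : ℝ≥0∞ | μ {x | τ < g x} ≤ ENNReal.ofReal t}.Nonempty := by
        by_contra hT
        rw [rearr_empty_top t hT] at hg0
        simp at hg0
      have h0 : μ {x | (0:ℝ≥0∞) < g x} ≤ ENNReal.ofReal t := by
        have := rearr_mem t hT; rwa [hg0] at this
      have hsub : {x | (0:ℝ≥0∞) < f x * g x} ⊆ {x | (0:ℝ≥0∞) < g x} := by
        intro x hx
        simp only [Set.mem_setOf_eq, pos_iff_ne_zero] at hx ⊢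
        exact fun h => hx (by simp [h])
      exact le_trans (measure_mono hsub)
        (le_trans h0 (ENNReal.ofReal_le_ofReal (by linarith)))
    · rw [ENNReal.top_mul hg0]; exact le_top

/-- change of variables `x ↦ c * x` on `(0, ∞)` for lower integrals, no measurability needed. -/
lemma lintegral_Ioi_comp_mul {c : ℝ} (hc : 0 < c) (g : ℝ → ℝ≥0∞) :
    ∫⁻ x in Set.Ioi (0:ℝ), g (c * x) = ENNReal.ofReal c⁻¹ * ∫⁻ x in Set.Ioi (0:ℝ), g x := by
  have he : MeasurableEmbedding (fun x : ℝ => c * x) :=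
    (Homeomorph.mulLeft₀ c hc.ne').measurableEmbedding
  have hmap : Measure.map (fun x : ℝ => c * x) volume = ENNReal.ofReal c⁻¹ • volume := by
    rw [Real.map_volume_mul_left hc.ne', abs_of_nonneg (inv_nonneg.mpr hc.le)]
  have hpre : (fun x : ℝ => c * x) ⁻¹' Set.Ioi 0 = Set.Ioi 0 := by
    ext x; simp [Set.mem_Ioi, mul_pos_iff_of_pos_left hc]
  calc ∫⁻ x in Set.Ioi (0:ℝ), g (c * x)
      = ∫⁻ y, g y ∂(Measure.map (fun x : ℝ => c * x) (volume.restrict (Set.Ioi 0))) :=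
        (he.lintegral_map g).symm
    _ = ∫⁻ y, g y ∂((Measure.map (fun x : ℝ => c * x) volume).restrict (Set.Ioi 0)) := by
        rw [Measure.restrict_map he.measurable measurableSet_Ioi, hpre]
    _ = ENNReal.ofReal c⁻¹ * ∫⁻ x in Set.Ioi (0:ℝ), g x := by
        rw [hmap, Measure.restrict_smul, lintegral_smul_measure, smul_eq_mul]

lemma exp_neg_le (d : ℕ) (hd : 0 < d) {x : ℝ} (hx : 0 < x) :
    Real.exp (-x) ≤ (d:ℝ)^d / x^d := by
  have h1 : (x / d)^d ≤ Real.exp x := by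
    calc (x/d)^d ≤ (1 + x/d)^d := by
          apply pow_le_pow_left₀ (by positivity)
          linarith
      _ ≤ (Real.exp (x/d))^d := by
          apply pow_le_pow_left₀ (by positivity)
          linarith [Real.add_one_le_exp (x/d)]
      _ = Real.exp x := by
          rw [← Real.exp_nat_mul]
          congr 1
          field_simp
  have hxd : (0:ℝ) < x^d := by positivity
  have hdd : (0:ℝ) < (d:ℝ)^d := by positivity
  rw [Real.exp_neg]
  rw [div_pow] at h1
  have h2 : x^d / (d:ℝ)^d ≤ Real.exp x := h1
  have h3 : x^d ≤ (d:ℝ)^d * Real.exp x := by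
    rw [div_le_iff₀ hdd] at h2; linarith [h2]
  rw [inv_le_iff_one_le_mul₀ (Real.exp_pos x), div_mul_eq_mul_div, le_div_iff₀ hxd]
  calc 1 * x^d = x^d := one_mul _
    _ ≤ (d:ℝ)^d * Real.exp x := h3

lemma lintegral_ofReal_lt_top {s : Set ℝ} {f : ℝ → ℝ} (h : IntegrableOn f s) :
    ∫⁻ x in s, ENNReal.ofReal (f x) < ∞ := by
  refine lt_of_le_of_lt (lintegral_mono (fun x => Real.ofReal_le_enorm (f x)))
    h.hasFiniteIntegral

/-- finiteness of the Gamma-type integral. -/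
lemma gauss_integral_lt_top {a b : ℝ} (ha : 0 < a) (ha1 : a < 1) (hb : 0 < b)
    (d : ℕ) (hd : 0 < d) :
    ∫⁻ σ in Set.Ioi (0:ℝ),
      ENNReal.ofReal (σ^(a-1) * Real.exp (-((σ/b)^(2/(d:ℝ))))) < ∞ := by
  have hsplit : Set.Ioi (0:ℝ) = Set.Ioc 0 b ∪ Set.Ioi b := (Set.Ioc_union_Ioi_eq_Ioi hb.le).symm
  rw [hsplit, lintegral_union measurableSet_Ioi Set.Ioc_disjoint_Ioi_same]
  apply ENNReal.add_lt_top.mpr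
  constructor
  · -- near 0 : bounded by σ^(a-1)
    have hfin : ∫⁻ σ in Set.Ioc (0:ℝ) b, ENNReal.ofReal (σ^(a-1)) < ∞ := by
      refine lintegral_ofReal_lt_top ?_
      have := intervalIntegral.intervalIntegrable_rpow' (a := 0) (b := b) (r := a - 1) (by linarith)
      rw [intervalIntegrable_iff_integrableOn_Ioc_of_le hb.le] at this
      exact this
    refine lt_of_le_of_lt (lintegral_mono_ae ?_) hfin
    filter_upwards [ae_restrict_mem measurableSet_Ioc] with σ hσ
    refine ENNReal.ofReal_le_ofReal ?_
    have hσ0 : 0 < σ := hσ.1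
    calc σ^(a-1) * Real.exp (-((σ/b)^(2/(d:ℝ)))) ≤ σ^(a-1) * 1 :=
          mul_le_mul_of_nonneg_left (Real.exp_le_one_iff.mpr
            (neg_nonpos.mpr (Real.rpow_nonneg (by positivity) _))) (by positivity)
      _ = σ^(a-1) := mul_one _
  · -- tail : bounded by (d^d * b^2) * σ^(a-3)
    have hbnd : ∀ σ ∈ Set.Ioi b, σ^(a-1) * Real.exp (-((σ/b)^(2/(d:ℝ))))
        ≤ ((d:ℝ)^d * b^2) * σ^(a-3) := by
      intro σ hσ
      have hσb : 0 < σ := lt_trans hb hσ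
      have hx : 0 < (σ/b)^(2/(d:ℝ)) := Real.rpow_pos_of_pos (by positivity) _
      have h1 : Real.exp (-((σ/b)^(2/(d:ℝ)))) ≤ (d:ℝ)^d / ((σ/b)^(2/(d:ℝ)))^d :=
        exp_neg_le d hd hx
      have h2 : ((σ/b)^(2/(d:ℝ)))^(d:ℕ) = (σ/b)^(2:ℝ) := by
        rw [← Real.rpow_natCast ((σ/b)^(2/(d:ℝ))) d, ← Real.rpow_mul (by positivity)]
        congr 1
        field_simp
      rw [h2] at h1
      calc σ^(a-1) * Real.exp (-((σ/b)^(2/(d:ℝ))))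
          ≤ σ^(a-1) * ((d:ℝ)^d / (σ/b)^(2:ℝ)) := by
            apply mul_le_mul_of_nonneg_left h1 (by positivity)
        _ = ((d:ℝ)^d * b^2) * σ^(a-3) := by
            have hkey : σ^(a-1) / σ^(2:ℝ) = σ^(a-3) := by
              rw [← Real.rpow_sub hσb]; congr 1; ring
            have hb2 : (0:ℝ) < b^(2:ℝ) := Real.rpow_pos_of_pos hb _
            have hσ2 : (0:ℝ) < σ^(2:ℝ) := Real.rpow_pos_of_pos hσb _
            rw [Real.div_rpow hσb.le hb.le, ← hkey]
            field_simp
            norm_cast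
    have hfin : ∫⁻ σ in Set.Ioi b, ENNReal.ofReal (((d:ℝ)^d * b^2) * σ^(a-3)) < ∞ := by
      refine lintegral_ofReal_lt_top ?_
      exact (integrableOn_Ioi_rpow_of_lt (by linarith) hb).const_mul _
    refine lt_of_le_of_lt (lintegral_mono_ae ?_) hfin
    filter_upwards [ae_restrict_mem measurableSet_Ioi] with σ hσ
    exact ENNReal.ofReal_le_ofReal (hbnd σ hσ)

lemma rearr_gauss_le (d : ℕ) (hd : 0 < d) {t u : ℝ} (ht : 0 < t) (hu : 0 < u) :
    rearr (volume : Measure (Esp d))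
        (fun ξ => ENNReal.ofReal (Real.exp (-(t * ‖ξ‖^2)))) u
      ≤ ENNReal.ofReal (Real.exp (-(t *
          (u / (volume (ball (0:Esp d) 1)).toReal)^(2/(d:ℝ))))) := by
  haveI : Nontrivial (Esp d) := by
    apply Module.nontrivial_of_finrank_pos (R := ℝ)
    rw [finrank_euclideanSpace_fin]
    exact hd
  set ωE : ℝ≥0∞ := volume (ball (0:Esp d) 1) with hωE
  have hω_pos : 0 < ωE := measure_ball_pos _ _ one_pos
  have hω_fin : ωE ≠ ∞ := measure_ball_lt_top.ne
  set ω : ℝ := ωE.toReal with hω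
  have hω0 : 0 < ω := ENNReal.toReal_pos hω_pos.ne' hω_fin
  set R : ℝ := (u / ω) ^ (1/(d:ℝ)) with hR
  have hR0 : 0 < R := Real.rpow_pos_of_pos (by positivity) _
  have hR2 : R^(2:ℕ) = (u/ω)^(2/(d:ℝ)) := by
    rw [hR, ← Real.rpow_natCast ((u/ω) ^ (1/(d:ℝ))) 2, ← Real.rpow_mul (by positivity)]
    congr 1
    push_cast
    field_simp
  refine rearr_le u (le_of_eq ?_)
  have hset : {ξ : Esp d |
      ENNReal.ofReal (Real.exp (-(t * (u/ω)^(2/(d:ℝ))))) <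
        ENNReal.ofReal (Real.exp (-(t * ‖ξ‖^2)))} = ball (0:Esp d) R := by
    ext ξ
    simp only [Set.mem_setOf_eq, mem_ball, dist_zero_right]
    rw [ENNReal.ofReal_lt_ofReal_iff (Real.exp_pos _), Real.exp_lt_exp, neg_lt_neg_iff,
      mul_lt_mul_iff_right₀ ht, ← hR2]
    constructor
    · intro h
      by_contra hc
      push_neg at hc
      exact absurd (pow_le_pow_left₀ hR0.le hc 2) (not_le_of_gt h)
    · intro h
      exact pow_lt_pow_left₀ h (norm_nonneg _) (by norm_num)
  rw [hset, Measure.addHaar_ball _ _ hR0.le, finrank_euclideanSpace_fin]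
  have hRd : R ^ d = u / ω := by
    rw [hR, ← Real.rpow_natCast ((u/ω) ^ (1/(d:ℝ))) d, ← Real.rpow_mul (by positivity)]
    rw [one_div, inv_mul_cancel₀ (by exact_mod_cast hd.ne' : (d:ℝ) ≠ 0), Real.rpow_one]
  rw [hRd, ← hωE, ← ENNReal.ofReal_toReal hω_fin, ← hω, ← ENNReal.ofReal_mul (by positivity)]
  rw [div_mul_cancel₀ _ hω0.ne']

lemma weak_bound {α : Type*} [MeasurableSpace α] (μ : Measure α) (f : α → ℝ≥0∞) {γ ρ : ℝ}
    (hγ : 0 < γ) (hρ : 0 < ρ) {u : ℝ} (hu : 0 < u) :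
    (ENNReal.ofReal (u^γ) * rearr μ f u)^ρ ≤ (2:ℝ≥0∞)^(1+γ*ρ) *
      ∫⁻ x in Set.Ioo (u/2) u, (ENNReal.ofReal x ^ γ * rearr μ f x)^ρ / ENNReal.ofReal x := by
  set X : ℝ≥0∞ := (ENNReal.ofReal (u/2) ^ γ * rearr μ f u)^ρ with hX
  have hu2 : (0:ℝ) < u/2 := by linarith
  have hlow : X / ENNReal.ofReal u * ENNReal.ofReal (u/2)
      ≤ ∫⁻ x in Set.Ioo (u/2) u, (ENNReal.ofReal x ^ γ * rearr μ f x)^ρ / ENNReal.ofReal x := by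
    have hconst : ∫⁻ _x in Set.Ioo (u/2) u, (X / ENNReal.ofReal u) ∂volume
        = X / ENNReal.ofReal u * ENNReal.ofReal (u/2) := by
      rw [setLIntegral_const, Real.volume_Ioo]
      congr 2
      ring
    rw [← hconst]
    refine lintegral_mono_ae ?_
    filter_upwards [ae_restrict_mem measurableSet_Ioo] with x hx
    refine ENNReal.div_le_div ?_ (ENNReal.ofReal_le_ofReal hx.2.le)
    refine ENNReal.rpow_le_rpow ?_ hρ.le
    exact mul_le_mul' (ENNReal.rpow_le_rpow (ENNReal.ofReal_le_ofReal hx.1.le) hγ.le)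
      (rearr_anti hx.2.le)
  have hu0 : ENNReal.ofReal u ≠ 0 := by simp [hu]
  have huT : ENNReal.ofReal u ≠ ∞ := ENNReal.ofReal_ne_top
  have hhalf : ENNReal.ofReal (u/2) = ENNReal.ofReal u / 2 := by
    rw [ENNReal.ofReal_div_of_pos (by norm_num), ENNReal.ofReal_ofNat]
  have hXle : X ≤ 2 * ∫⁻ x in Set.Ioo (u/2) u,
      (ENNReal.ofReal x ^ γ * rearr μ f x)^ρ / ENNReal.ofReal x := by
    have h1 : X / ENNReal.ofReal u * ENNReal.ofReal (u/2) = X / 2 := by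
      calc X / ENNReal.ofReal u * ENNReal.ofReal (u/2)
          = X * ((ENNReal.ofReal u)⁻¹ * (ENNReal.ofReal u * 2⁻¹)) := by
            rw [hhalf, div_eq_mul_inv, ENNReal.div_eq_inv_mul, mul_assoc, mul_comm 2⁻¹]
        _ = X * 2⁻¹ := by
            rw [← mul_assoc (ENNReal.ofReal u)⁻¹, ENNReal.inv_mul_cancel hu0 huT, one_mul]
        _ = X / 2 := (div_eq_mul_inv _ _).symm
    rw [h1] at hlow
    rw [ENNReal.div_le_iff_le_mul (Or.inl (by norm_num)) (Or.inl (by norm_num))] at hlow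
    rwa [mul_comm] at hlow
  have hLHS : (ENNReal.ofReal (u^γ) * rearr μ f u)^ρ = (2:ℝ≥0∞)^(γ*ρ) * X := by
    have h1 : ENNReal.ofReal (u^γ) = (2:ℝ≥0∞)^γ * ENNReal.ofReal (u/2) ^ γ := by
      rw [← ENNReal.mul_rpow_of_nonneg _ _ hγ.le, ← ENNReal.ofReal_ofNat,
        ← ENNReal.ofReal_mul (by norm_num), ← ENNReal.ofReal_rpow_of_pos (by linarith)]
      congr 2
      ring
    rw [h1, mul_assoc, ENNReal.mul_rpow_of_nonneg _ _ hρ.le, ← ENNReal.rpow_mul]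
  rw [hLHS]
  calc (2:ℝ≥0∞)^(γ*ρ) * X ≤ (2:ℝ≥0∞)^(γ*ρ) * (2 * ∫⁻ x in Set.Ioo (u/2) u,
        (ENNReal.ofReal x ^ γ * rearr μ f x)^ρ / ENNReal.ofReal x) :=
        mul_le_mul_right hXle _
    _ = (2:ℝ≥0∞)^(1+γ*ρ) * ∫⁻ x in Set.Ioo (u/2) u,
        (ENNReal.ofReal x ^ γ * rearr μ f x)^ρ / ENNReal.ofReal x := by
        rw [← mul_assoc, ENNReal.rpow_add 1 _ (by norm_num) (by norm_num), ENNReal.rpow_one,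
          mul_comm ((2:ℝ≥0∞)^(γ*ρ))]

lemma master (d : ℕ) (hd : 0 < d) (F : Esp d → ℝ≥0∞) {t γ a : ℝ}
    (ht : 0 < t) :
    ENNReal.ofReal (t ^ ((d:ℝ) * a / 2)) *
      ∫⁻ τ in Set.Ioi (0:ℝ), (ENNReal.ofReal τ ^ (a + γ) *
        rearr volume (fun ξ => ENNReal.ofReal (Real.exp (-(t * ‖ξ‖^2))) * F ξ) τ)
          / ENNReal.ofReal τ
    ≤ ∫⁻ σ in Set.Ioi (0:ℝ),
        ENNReal.ofReal (σ^(a-1) *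
            Real.exp (-((σ/(2*(volume (ball (0:Esp d) 1)).toReal))^(2/(d:ℝ)))))
          * (ENNReal.ofReal ((t^(-((d:ℝ)/2)) * σ)^γ)
              * rearr volume F ((t^(-((d:ℝ)/2)) * σ)/2)) := by
  have hd0 : ((d:ℝ)) ≠ 0 := by exact_mod_cast hd.ne'
  set ωE : ℝ≥0∞ := volume (ball (0:Esp d) 1) with hωE
  haveI : Nontrivial (Esp d) := by
    apply Module.nontrivial_of_finrank_pos (R := ℝ)
    rw [finrank_euclideanSpace_fin]
    exact hd
  have hω0 : 0 < ωE.toReal :=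
    ENNReal.toReal_pos (measure_ball_pos _ _ one_pos).ne' measure_ball_lt_top.ne
  set ω : ℝ := ωE.toReal with hω
  set c : ℝ := t^(-((d:ℝ)/2)) with hc
  have hc0 : 0 < c := Real.rpow_pos_of_pos ht _
  set w : Esp d → ℝ≥0∞ := fun ξ => ENNReal.ofReal (Real.exp (-(t * ‖ξ‖^2))) with hw
  set gbig : ℝ → ℝ≥0∞ := fun τ =>
    ENNReal.ofReal (τ^(a+γ-1) * Real.exp (-(t * (τ/(2*ω))^(2/(d:ℝ)))))
      * rearr volume F (τ/2) with hgbig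
  have stepB : (∫⁻ τ in Set.Ioi (0:ℝ), (ENNReal.ofReal τ ^ (a + γ) *
        rearr volume (fun ξ => w ξ * F ξ) τ) / ENNReal.ofReal τ)
      ≤ ∫⁻ τ in Set.Ioi (0:ℝ), gbig τ := by
    refine lintegral_mono_ae ?_
    filter_upwards [ae_restrict_mem measurableSet_Ioi] with τ hτ
    have hτ0 : (0:ℝ) < τ := hτ
    have hi : rearr volume (fun ξ => w ξ * F ξ) τ
        ≤ ENNReal.ofReal (Real.exp (-(t * (τ/(2*ω))^(2/(d:ℝ))))) * rearr volume F (τ/2) := by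
      have h1 : rearr volume (fun ξ => w ξ * F ξ) τ
          ≤ rearr volume w (τ/2) * rearr volume F (τ/2) := by
        have := rearr_mul_le (μ := (volume : Measure (Esp d))) (f := w) (g := F) (τ/2)
          (by linarith)
        rwa [add_halves] at this
      refine le_trans h1 (mul_le_mul_left ?_ _)
      have := rearr_gauss_le d hd ht (by linarith : (0:ℝ) < τ/2)
      rw [← hωE, ← hω] at this
      rw [div_div] at this
      exact this
    calc (ENNReal.ofReal τ ^ (a + γ) * rearr volume (fun ξ => w ξ * F ξ) τ) / ENNReal.ofReal τ
        ≤ (ENNReal.ofReal τ ^ (a + γ) *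
            (ENNReal.ofReal (Real.exp (-(t * (τ/(2*ω))^(2/(d:ℝ))))) * rearr volume F (τ/2)))
          / ENNReal.ofReal τ :=
          ENNReal.div_le_div (mul_le_mul_right hi _) le_rfl
      _ = gbig τ := by
          simp only [hgbig]
          have hτne : ENNReal.ofReal τ ≠ 0 := by simp [hτ0]
          have hmul : ENNReal.ofReal (τ^(a+γ-1)) * ENNReal.ofReal τ
              = ENNReal.ofReal τ ^ (a+γ) := by
            rw [← ENNReal.ofReal_rpow_of_pos hτ0]
            nth_rewrite 2 [← ENNReal.rpow_one (ENNReal.ofReal τ)]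
            rw [← ENNReal.rpow_add _ _ hτne ENNReal.ofReal_ne_top]
            congr 1
            ring
          have h2 : ENNReal.ofReal τ ^ (a + γ) / ENNReal.ofReal τ
              = ENNReal.ofReal (τ^(a+γ-1)) := by
            rw [← hmul, div_eq_mul_inv, mul_assoc,
              ENNReal.mul_inv_cancel hτne ENNReal.ofReal_ne_top, mul_one]
          rw [ENNReal.ofReal_mul (by positivity), ← h2]
          simp only [div_eq_mul_inv]
          ring
  have stepC : (∫⁻ τ in Set.Ioi (0:ℝ), gbig τ)
      = ENNReal.ofReal c * ∫⁻ σ in Set.Ioi (0:ℝ), gbig (c * σ) := by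
    rw [lintegral_Ioi_comp_mul hc0 gbig, ← mul_assoc, ← ENNReal.ofReal_mul hc0.le,
      mul_inv_cancel₀ hc0.ne', ENNReal.ofReal_one, one_mul]
  have stepD : ∀ σ : ℝ, 0 < σ →
      ENNReal.ofReal (t ^ ((d:ℝ) * a / 2)) * (ENNReal.ofReal c * gbig (c * σ))
      = ENNReal.ofReal (σ^(a-1) * Real.exp (-((σ/(2*ω))^(2/(d:ℝ)))))
          * (ENNReal.ofReal ((c * σ)^γ) * rearr volume F ((c * σ)/2)) := by
    intro σ hσ
    have hcσ : 0 < c * σ := mul_pos hc0 hσ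
    have hexp : t * ((c*σ)/(2*ω))^(2/(d:ℝ)) = (σ/(2*ω))^(2/(d:ℝ)) := by
      have h1 : (c*σ)/(2*ω) = c * (σ/(2*ω)) := by ring
      rw [h1, Real.mul_rpow hc0.le (by positivity)]
      have h2 : c ^ (2/(d:ℝ)) = t⁻¹ := by
        show (t ^ (-((d:ℝ)/2))) ^ (2/(d:ℝ)) = t⁻¹
        rw [← Real.rpow_mul ht.le, show -((d:ℝ)/2)*(2/(d:ℝ)) = -1 by field_simp,
          Real.rpow_neg_one]
      rw [h2, ← mul_assoc, mul_inv_cancel₀ ht.ne', one_mul]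
    have hpow : t ^ ((d:ℝ) * a / 2) * (c * (c*σ)^(a+γ-1))
        = σ^(a-1) * (c*σ)^γ := by
      have h1 : (c*σ)^(a+γ-1) = (c*σ)^γ * (c*σ)^(a-1) := by
        rw [← Real.rpow_add hcσ]
        congr 1
        ring
      have h2 : (c*σ)^(a-1) = c^(a-1) * σ^(a-1) := Real.mul_rpow hc0.le hσ.le
      have h3 : t ^ ((d:ℝ) * a / 2) * (c * c^(a-1)) = 1 := by
        have hc1 : c * c^(a-1) = c^a := by
          nth_rewrite 1 [← Real.rpow_one c]
          rw [← Real.rpow_add hc0]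
          congr 1
          ring
        rw [hc1, hc, ← Real.rpow_mul ht.le, ← Real.rpow_add ht]
        rw [show (d:ℝ) * a / 2 + -((d:ℝ)/2) * a = 0 by ring, Real.rpow_zero]
      calc t ^ ((d:ℝ) * a / 2) * (c * (c*σ)^(a+γ-1))
          = (t ^ ((d:ℝ) * a / 2) * (c * c^(a-1))) * ((c*σ)^γ * σ^(a-1)) := by
            rw [h1, h2]; ring
        _ = σ^(a-1) * (c*σ)^γ := by rw [h3]; ring
    simp only [hgbig]
    rw [hexp]
    rw [← mul_assoc, ← mul_assoc, ← ENNReal.ofReal_mul (by positivity),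
      ← ENNReal.ofReal_mul (by positivity)]
    conv_rhs => rw [← mul_assoc, ← ENNReal.ofReal_mul (by positivity)]
    congr 2
    calc t ^ ((d:ℝ) * a / 2) * c * ((c*σ)^(a+γ-1) * Real.exp (-((σ/(2*ω))^(2/(d:ℝ)))))
        = (t ^ ((d:ℝ) * a / 2) * (c * (c*σ)^(a+γ-1))) * Real.exp (-((σ/(2*ω))^(2/(d:ℝ)))) := by
          ring
      _ = (σ^(a-1) * (c*σ)^γ) * Real.exp (-((σ/(2*ω))^(2/(d:ℝ)))) := by rw [hpow]
      _ = σ^(a-1) * Real.exp (-((σ/(2*ω))^(2/(d:ℝ)))) * (c*σ)^γ := by ring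
  calc ENNReal.ofReal (t ^ ((d:ℝ) * a / 2)) *
      ∫⁻ τ in Set.Ioi (0:ℝ), (ENNReal.ofReal τ ^ (a + γ) *
        rearr volume (fun ξ => w ξ * F ξ) τ) / ENNReal.ofReal τ
      ≤ ENNReal.ofReal (t ^ ((d:ℝ) * a / 2)) * ∫⁻ τ in Set.Ioi (0:ℝ), gbig τ :=
        mul_le_mul_right stepB _
    _ = ENNReal.ofReal (t ^ ((d:ℝ) * a / 2)) *
        (ENNReal.ofReal c * ∫⁻ σ in Set.Ioi (0:ℝ), gbig (c * σ)) := by rw [stepC]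
    _ = ∫⁻ σ in Set.Ioi (0:ℝ), ENNReal.ofReal (t ^ ((d:ℝ) * a / 2)) *
        (ENNReal.ofReal c * gbig (c * σ)) := by
        rw [lintegral_const_mul' _ _ ENNReal.ofReal_ne_top,
          lintegral_const_mul' _ _ ENNReal.ofReal_ne_top]
    _ = ∫⁻ σ in Set.Ioi (0:ℝ),
        ENNReal.ofReal (σ^(a-1) * Real.exp (-((σ/(2*ω))^(2/(d:ℝ)))))
          * (ENNReal.ofReal ((c * σ)^γ) * rearr volume F ((c * σ)/2)) := by
        refine setLIntegral_congr_fun measurableSet_Ioi ?_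
        exact fun σ hσ => stepD σ hσ

lemma dualExp_toReal {x : ℝ} (hx : 1 < x) :
    (1 / dualExp (ENNReal.ofReal x)).toReal = 1 - 1/x := by
  have hx0 : 0 < x := lt_trans one_pos hx
  have hinv : (0:ℝ) ≤ 1 - x⁻¹ := by
    have : x⁻¹ ≤ 1 := by
      rw [inv_le_one_iff₀]
      right
      linarith
    linarith
  rw [dualExp, one_div, inv_inv, one_div, ← ENNReal.ofReal_inv_of_pos hx0,
    ← ENNReal.ofReal_one, ← ENNReal.ofReal_sub _ (by positivity),
    ENNReal.toReal_ofReal hinv, one_div]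

lemma nnnorm_cexp_ofReal (x : ℝ) :
    (‖Complex.exp ((x:ℝ) : ℂ)‖₊ : ℝ≥0∞) = ENNReal.ofReal (Real.exp x) := by
  rw [← Complex.norm_exp_ofReal]
  exact (ofReal_norm _).symm

end HeatAux

end

open HeatAux Metric Set
open scoped Topology

/-- Heat semigroup smoothing from `Ḣ^{d/p-1}_{𝓛^{p,r}}`: with `1 < p ≤ d`, `1 ≤ r < ∞`,
`1/p - 1/d < 1/p̃ < 1/p` and `α = d(1/p - 1/p̃)`, one has
`sup_{t>0} t^{α/2} ‖e^{tΔ}u₀‖_{Ḣ^{d/p-1}_{𝓛^{p̃,1}}} ≤ C ‖u₀‖_{Ḣ^{d/p-1}_{𝓛^{p,r}}}`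
and `t^{α/2} ‖e^{tΔ}u₀‖_{Ḣ^{d/p-1}_{𝓛^{p̃,1}}} → 0` as `t → 0⁺`. -/
theorem heat_smoothing_subcritical (d : ℕ) (hd : 0 < d) (p pt : ℝ)
    (hp1 : 1 < p) (hp2 : p ≤ d) (r : ℝ≥0∞) (hr1 : 1 ≤ r) (hr2 : r ≠ ∞)
    (hpt1 : 1 / p - 1 / d < 1 / pt) (hpt2 : 1 / pt < 1 / p) :
    ∃ C : ℝ≥0∞, 0 < C ∧ C < ∞ ∧ ∀ u0 : Esp d → ℂ,
      HsL d ((d : ℝ) / p - 1) (ENNReal.ofReal p) r u0 < ∞ →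
      (∀ t : ℝ, 0 < t →
        ENNReal.ofReal (t ^ ((d * (1 / p - 1 / pt)) / 2)) *
          sflNorm d ((d : ℝ) / p - 1) (ENNReal.ofReal pt) 1
            (fun ξ => Complex.exp (-(t * ‖ξ‖ ^ 2)) * 𝓕 u0 ξ) ≤
          C * HsL d ((d : ℝ) / p - 1) (ENNReal.ofReal p) r u0) ∧
      Tendsto (fun t : ℝ =>
          ENNReal.ofReal (t ^ ((d * (1 / p - 1 / pt)) / 2)) *
            sflNorm d ((d : ℝ) / p - 1) (ENNReal.ofReal pt) 1
              (fun ξ => Complex.exp (-(t * ‖ξ‖ ^ 2)) * 𝓕 u0 ξ))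
        (nhdsWithin 0 (Set.Ioi 0)) (nhds 0) := by
  classical
  have hd0 : (0:ℝ) < d := by exact_mod_cast hd
  have hd1 : (1:ℝ) ≤ d := by exact_mod_cast hd
  have hp0 : (0:ℝ) < p := lt_trans one_pos hp1
  have hdp : 1/(d:ℝ) ≤ 1/p := one_div_le_one_div_of_le hp0 hp2
  have hptpos : 0 < 1/pt := lt_of_le_of_lt (by linarith) hpt1
  have hpt0 : (0:ℝ) < pt := by
    by_contra h
    push_neg at h
    have : 1/pt ≤ 0 := one_div_nonpos.mpr h
    linarith
  have hpt_gt1 : 1 < pt := by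
    have h1 : 1/pt < 1 := lt_trans hpt2 ((div_lt_one hp0).mpr hp1)
    exact (div_lt_one hpt0).mp h1
  set γ : ℝ := 1 - 1/p with hγ_def
  have hγ0 : 0 < γ := by
    rw [hγ_def]
    have : 1/p < 1 := (div_lt_one hp0).mpr hp1
    linarith
  set a : ℝ := 1/p - 1/pt with ha_def
  have ha0 : 0 < a := by rw [ha_def]; linarith
  have ha1 : a < 1 := by
    rw [ha_def]
    have h2 : 1/(d:ℝ) ≤ 1 := by
      rw [div_le_one hd0]
      exact hd1
    linarith [hpt1]
  have hρ1 : (1:ℝ) ≤ r.toReal := by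
    have := ENNReal.toReal_mono hr2 hr1
    simpa using this
  have hρ0 : 0 < r.toReal := by linarith
  have hγp : (1 / dualExp (ENNReal.ofReal p)).toReal = γ := by
    rw [hγ_def]
    exact dualExp_toReal hp1
  have hγpt : (1 / dualExp (ENNReal.ofReal pt)).toReal = a + γ := by
    rw [dualExp_toReal hpt_gt1, ha_def, hγ_def]
    ring
  haveI : Nontrivial (Esp d) := by
    apply Module.nontrivial_of_finrank_pos (R := ℝ)
    rw [finrank_euclideanSpace_fin]
    exact hd
  set ω : ℝ := (volume (Metric.ball (0:Esp d) 1)).toReal with hω_def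
  have hω0 : 0 < ω :=
    ENNReal.toReal_pos (measure_ball_pos _ _ one_pos).ne' measure_ball_lt_top.ne
  set J : ℝ≥0∞ := ∫⁻ σ in Set.Ioi (0:ℝ),
      ENNReal.ofReal (σ^(a-1) * Real.exp (-((σ/(2*ω))^(2/(d:ℝ))))) with hJ_def
  have hJ : J < ∞ := HeatAux.gauss_integral_lt_top ha0 ha1 (by positivity) d hd
  set Kc : ℝ≥0∞ := (2:ℝ≥0∞)^γ * (2:ℝ≥0∞)^(γ + 1/r.toReal) with hKc_def
  have hKc_fin : Kc ≠ ∞ := by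
    rw [hKc_def]
    exact (ENNReal.mul_lt_top
      (ENNReal.rpow_lt_top_of_nonneg hγ0.le (by norm_num))
      (ENNReal.rpow_lt_top_of_nonneg (by positivity) (by norm_num))).ne
  refine ⟨Kc * J + 1, lt_of_lt_of_le zero_lt_one le_add_self, ?_, ?_⟩
  · exact ENNReal.add_lt_top.mpr
      ⟨ENNReal.mul_lt_top hKc_fin.lt_top hJ, ENNReal.one_lt_top⟩
  intro u0 hfin
  set F : Esp d → ℝ≥0∞ :=
    fun ξ => ENNReal.ofReal (‖ξ‖ ^ ((d:ℝ)/p - 1)) * (‖𝓕 u0 ξ‖₊ : ℝ≥0∞) with hF_def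
  set N : ℝ≥0∞ := HsL d ((d:ℝ)/p - 1) (ENNReal.ofReal p) r u0 with hN_def
  have hNval : N = (∫⁻ x in Set.Ioi (0:ℝ),
      (ENNReal.ofReal x ^ γ * rearr volume F x)^(r.toReal) / ENNReal.ofReal x)^(1/r.toReal) := by
    rw [hN_def]
    simp only [HsL, sflNorm, lorentzNorm, if_neg hr2]
    rw [hγp, hF_def]
  set Itot : ℝ≥0∞ := ∫⁻ x in Set.Ioi (0:ℝ),
      (ENNReal.ofReal x ^ γ * rearr volume F x)^(r.toReal) / ENNReal.ofReal x with hItot_def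
  have hItot : Itot < ∞ := by
    have h1 : N < ∞ := hfin
    rw [hNval] at h1
    exact (ENNReal.rpow_lt_top_iff_of_pos (by positivity)).mp h1
  set ν : Measure ℝ := (volume.restrict (Set.Ioi 0)).withDensity
      (fun x => (ENNReal.ofReal x ^ γ * rearr volume F x)^(r.toReal) / ENNReal.ofReal x)
      with hν_def
  have hν_univ : ν Set.univ = Itot := by
    rw [hν_def, withDensity_apply _ MeasurableSet.univ, Measure.restrict_univ, hItot_def]
  haveI hνfin : IsFiniteMeasure ν := ⟨by rw [hν_univ]; exact hItot⟩
  have hνIoo : ∀ u : ℝ, 0 < u →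
      (∫⁻ x in Set.Ioo (u/2) u,
        (ENNReal.ofReal x ^ γ * rearr volume F x)^(r.toReal) / ENNReal.ofReal x)
        ≤ ν (Set.Ioi (u/2)) := by
    intro u hu
    rw [hν_def, withDensity_apply _ measurableSet_Ioi,
      Measure.restrict_restrict measurableSet_Ioi,
      Set.inter_eq_self_of_subset_left (Set.Ioi_subset_Ioi (by linarith : (0:ℝ) ≤ u/2))]
    exact lintegral_mono' (Measure.restrict_mono Set.Ioo_subset_Ioi_self le_rfl) le_rfl
  have hroot : ∀ X K : ℝ≥0∞, X ^ (r.toReal) ≤ K → X ≤ K ^ (1/r.toReal) := by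
    intro X K h
    have h2 : (X ^ r.toReal) ^ (1/r.toReal) ≤ K ^ (1/r.toReal) :=
      ENNReal.rpow_le_rpow h (by positivity)
    rwa [← ENNReal.rpow_mul, mul_one_div_cancel hρ0.ne', ENNReal.rpow_one] at h2
  have hpow2 : ((2:ℝ≥0∞)^(1+γ*r.toReal))^(1/r.toReal) = (2:ℝ≥0∞)^(γ + 1/r.toReal) := by
    rw [← ENNReal.rpow_mul]
    congr 1
    field_simp
    ring
  have hDbound : ∀ u : ℝ, 0 < u →
      ENNReal.ofReal (u^γ) * rearr volume F u ≤ (2:ℝ≥0∞)^(γ + 1/r.toReal) * N := by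
    intro u hu
    have h1 := HeatAux.weak_bound volume F hγ0 hρ0 hu
    have h2 : (ENNReal.ofReal (u^γ) * rearr volume F u)^(r.toReal)
        ≤ (2:ℝ≥0∞)^(1+γ*r.toReal) * Itot := by
      refine le_trans h1 (mul_le_mul_right ?_ _)
      rw [hItot_def]
      refine lintegral_mono' (Measure.restrict_mono ?_ le_rfl) le_rfl
      intro x hx
      have : u/2 < x := hx.1
      simp only [Set.mem_Ioi]
      linarith
    have h3 := hroot _ _ h2
    rwa [ENNReal.mul_rpow_of_nonneg _ _ (by positivity), hpow2, ← hNval] at h3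
  have hDtail : ∀ u : ℝ, 0 < u →
      ENNReal.ofReal (u^γ) * rearr volume F u
        ≤ ((2:ℝ≥0∞)^(1+γ*r.toReal) * ν (Set.Ioi (u/2)))^(1/r.toReal) := by
    intro u hu
    exact hroot _ _ (le_trans (HeatAux.weak_bound volume F hγ0 hρ0 hu)
      (mul_le_mul_right (hνIoo u hu) _))
  have hνtend : Tendsto (fun v : ℝ => ν (Set.Ioi v)) atTop (𝓝 0) := by
    have hempty : (⋂ v : ℝ, Set.Ioi v) = (∅ : Set ℝ) := by
      ext x
      simp only [Set.mem_iInter, Set.mem_Ioi, Set.mem_empty_iff_false, iff_false, not_forall,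
        not_lt]
      exact ⟨x, le_rfl⟩
    have h := tendsto_measure_iInter_atTop (μ := ν) (s := fun v : ℝ => Set.Ioi v)
      (fun v => measurableSet_Ioi.nullMeasurableSet)
      (fun i j hij => Set.Ioi_subset_Ioi hij) ⟨0, measure_ne_top ν _⟩
    rwa [hempty, measure_empty] at h
  have h2top : ((2:ℝ≥0∞)^(1+γ*r.toReal)) ≠ ∞ :=
    (ENNReal.rpow_lt_top_of_nonneg (by positivity) (by norm_num)).ne
  have hDtend : Tendsto (fun u : ℝ => ENNReal.ofReal (u^γ) * rearr volume F u) atTop (𝓝 0) := by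
    have hup : Tendsto (fun u : ℝ =>
        ((2:ℝ≥0∞)^(1+γ*r.toReal) * ν (Set.Ioi (u/2)))^(1/r.toReal)) atTop (𝓝 0) := by
      have h1 : Tendsto (fun u : ℝ => ν (Set.Ioi (u/2))) atTop (𝓝 0) :=
        hνtend.comp (tendsto_id.atTop_div_const (by norm_num))
      have h2 : Tendsto (fun u : ℝ => (2:ℝ≥0∞)^(1+γ*r.toReal) * ν (Set.Ioi (u/2)))
          atTop (𝓝 0) := by
        have := ENNReal.Tendsto.const_mul h1 (Or.inr h2top)
        rwa [mul_zero] at this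
      have h3 := (ENNReal.continuous_rpow_const (y := 1/r.toReal)).tendsto 0
      rw [ENNReal.zero_rpow_of_pos (by positivity)] at h3
      exact h3.comp h2
    refine tendsto_of_tendsto_of_tendsto_of_le_of_le' tendsto_const_nhds hup ?_ ?_
    · exact Filter.Eventually.of_forall (fun u => zero_le)
    · filter_upwards [Filter.eventually_gt_atTop 0] with u hu
      exact hDtail u hu
  have hsplit2 : ∀ s : ℝ, 0 < s →
      ENNReal.ofReal (s^γ) = (2:ℝ≥0∞)^γ * ENNReal.ofReal ((s/2)^γ) := by
    intro s hs
    rw [← ENNReal.ofReal_ofNat, ENNReal.ofReal_rpow_of_pos (by norm_num),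
      ← ENNReal.ofReal_mul (by positivity)]
    congr 1
    rw [← Real.mul_rpow (by norm_num) (by positivity)]
    congr 1
    ring
  have hχtend : Tendsto (fun s : ℝ => ENNReal.ofReal (s^γ) * rearr volume F (s/2))
      atTop (𝓝 0) := by
    have hup : Tendsto (fun s : ℝ =>
        (2:ℝ≥0∞)^γ * (ENNReal.ofReal ((s/2)^γ) * rearr volume F (s/2))) atTop (𝓝 0) := by
      have h1 : Tendsto (fun s : ℝ => ENNReal.ofReal ((s/2)^γ) * rearr volume F (s/2))
          atTop (𝓝 0) :=
        hDtend.comp (tendsto_id.atTop_div_const (by norm_num : (0:ℝ) < 2))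
      have := ENNReal.Tendsto.const_mul h1
        (Or.inr (ENNReal.rpow_lt_top_of_nonneg (x := 2) hγ0.le (by norm_num)).ne)
      rwa [mul_zero] at this
    refine tendsto_of_tendsto_of_tendsto_of_le_of_le' tendsto_const_nhds hup ?_ ?_
    · exact Filter.Eventually.of_forall (fun s => zero_le)
    · filter_upwards [Filter.eventually_gt_atTop 0] with s hs
      rw [hsplit2 s hs, mul_assoc]
  have hχbound : ∀ s : ℝ, 0 < s →
      ENNReal.ofReal (s^γ) * rearr volume F (s/2) ≤ Kc * N := by
    intro s hs
    rw [hsplit2 s hs, mul_assoc, hKc_def, mul_assoc]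
    exact mul_le_mul_right (hDbound (s/2) (by linarith)) _
  have hsfl : ∀ t : ℝ,
      sflNorm d ((d:ℝ)/p - 1) (ENNReal.ofReal pt) 1
        (fun ξ => Complex.exp (-(t * ‖ξ‖ ^ 2)) * 𝓕 u0 ξ)
      = ∫⁻ τ in Set.Ioi (0:ℝ), (ENNReal.ofReal τ ^ (a + γ) *
          rearr volume
            (fun ξ : Esp d => ENNReal.ofReal (Real.exp (-(t * ‖ξ‖^2))) * F ξ) τ)
          / ENNReal.ofReal τ := by
    intro t
    have hfun : (fun ξ : Esp d => ENNReal.ofReal (‖ξ‖ ^ ((d:ℝ)/p - 1)) *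
          (‖Complex.exp (-(t * ‖ξ‖ ^ 2)) * 𝓕 u0 ξ‖₊ : ℝ≥0∞))
        = fun ξ : Esp d => ENNReal.ofReal (Real.exp (-(t * ‖ξ‖^2))) * F ξ := by
      funext ξ
      rw [hF_def]
      have hz : -((t : ℂ) * (‖ξ‖ : ℂ) ^ 2) = ((-(t * ‖ξ‖^2) : ℝ) : ℂ) := by
        push_cast
        ring
      calc ENNReal.ofReal (‖ξ‖ ^ ((d:ℝ)/p - 1)) *
            (‖Complex.exp (-(t * ‖ξ‖ ^ 2)) * 𝓕 u0 ξ‖₊ : ℝ≥0∞)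
          = ENNReal.ofReal (‖ξ‖ ^ ((d:ℝ)/p - 1)) *
            ((‖Complex.exp (-((t : ℂ) * (‖ξ‖ : ℂ) ^ 2))‖₊ : ℝ≥0∞) * (‖𝓕 u0 ξ‖₊ : ℝ≥0∞)) := by
            rw [nnnorm_mul, ENNReal.coe_mul]
        _ = ENNReal.ofReal (Real.exp (-(t * ‖ξ‖^2))) *
            (ENNReal.ofReal (‖ξ‖ ^ ((d:ℝ)/p - 1)) * (‖𝓕 u0 ξ‖₊ : ℝ≥0∞)) := by
            rw [hz, HeatAux.nnnorm_cexp_ofReal]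
            ring
    simp only [sflNorm, lorentzNorm, if_neg (ENNReal.one_ne_top), hγpt, ENNReal.toReal_one,
      ENNReal.rpow_one, one_div_one]
    rw [hfun]
  have hmain : ∀ t : ℝ, 0 < t →
      ENNReal.ofReal (t ^ ((d:ℝ) * a / 2)) *
        sflNorm d ((d:ℝ)/p - 1) (ENNReal.ofReal pt) 1
          (fun ξ => Complex.exp (-(t * ‖ξ‖ ^ 2)) * 𝓕 u0 ξ)
      ≤ ∫⁻ σ in Set.Ioi (0:ℝ),
          ENNReal.ofReal (σ^(a-1) * Real.exp (-((σ/(2*ω))^(2/(d:ℝ)))))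
            * (ENNReal.ofReal ((t^(-((d:ℝ)/2)) * σ)^γ)
                * rearr volume F ((t^(-((d:ℝ)/2)) * σ)/2)) := by
    intro t ht
    rw [hsfl t]
    exact HeatAux.master d hd F ht
  constructor
  · -- part 1 : uniform bound
    intro t ht
    refine le_trans (hmain t ht) ?_
    have hKcN : Kc * N ≠ ∞ := ENNReal.mul_ne_top hKc_fin hfin.ne
    calc (∫⁻ σ in Set.Ioi (0:ℝ),
          ENNReal.ofReal (σ^(a-1) * Real.exp (-((σ/(2*ω))^(2/(d:ℝ)))))
            * (ENNReal.ofReal ((t^(-((d:ℝ)/2)) * σ)^γ)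
                * rearr volume F ((t^(-((d:ℝ)/2)) * σ)/2)))
        ≤ ∫⁻ σ in Set.Ioi (0:ℝ),
          ENNReal.ofReal (σ^(a-1) * Real.exp (-((σ/(2*ω))^(2/(d:ℝ))))) * (Kc * N) := by
          refine lintegral_mono_ae ?_
          filter_upwards [ae_restrict_mem measurableSet_Ioi] with σ hσ
          exact mul_le_mul_right
            (hχbound _ (mul_pos (Real.rpow_pos_of_pos ht _) hσ)) _
      _ = J * (Kc * N) := by
          rw [lintegral_mul_const' _ _ hKcN, hJ_def]
      _ ≤ (Kc * J + 1) * N := by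
          rw [← mul_assoc, mul_comm J Kc]
          exact mul_le_mul_left le_self_add _
  · -- part 2 : limit
    have hctend : ∀ σ : ℝ, 0 < σ →
        Tendsto (fun t : ℝ => t^(-((d:ℝ)/2)) * σ) (𝓝[>] (0:ℝ)) atTop := by
      intro σ hσ
      have hA : Tendsto (fun t:ℝ => t^((d:ℝ)/2)) (𝓝[>] (0:ℝ)) (𝓝[>] (0:ℝ)) := by
        apply tendsto_nhdsWithin_of_tendsto_nhds_of_eventually_within
        · have hcont : ContinuousAt (fun t:ℝ => t^((d:ℝ)/2)) 0 :=
            Real.continuousAt_rpow_const 0 _ (Or.inr (by positivity))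
          have h00 := hcont.tendsto
          rw [Real.zero_rpow (by positivity : (0:ℝ) < (d:ℝ)/2).ne'] at h00
          exact h00.mono_left nhdsWithin_le_nhds
        · filter_upwards [self_mem_nhdsWithin] with t ht
          exact Real.rpow_pos_of_pos ht _
      have hB : Tendsto (fun t:ℝ => (t^((d:ℝ)/2))⁻¹) (𝓝[>] (0:ℝ)) atTop :=
        tendsto_inv_nhdsGT_zero.comp hA
      have hC2 : Tendsto (fun t:ℝ => t^(-((d:ℝ)/2))) (𝓝[>] (0:ℝ)) atTop := by
        refine Tendsto.congr' ?_ hB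
        filter_upwards [self_mem_nhdsWithin] with t ht
        exact (Real.rpow_neg ht.le _).symm
      exact hC2.atTop_mul_const hσ
    have hΨ : Tendsto (fun t : ℝ => ∫⁻ σ in Set.Ioi (0:ℝ),
        ENNReal.ofReal (σ^(a-1) * Real.exp (-((σ/(2*ω))^(2/(d:ℝ)))))
          * (ENNReal.ofReal ((t^(-((d:ℝ)/2)) * σ)^γ)
              * rearr volume F ((t^(-((d:ℝ)/2)) * σ)/2))) (𝓝[>] (0:ℝ)) (𝓝 0) := by
      have h0 : (𝓝 (0:ℝ≥0∞)) = 𝓝 (∫⁻ _σ in Set.Ioi (0:ℝ), (0:ℝ≥0∞)) := by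
        rw [lintegral_zero]
      rw [h0]
      refine tendsto_lintegral_filter_of_dominated_convergence
        (fun σ => ENNReal.ofReal (σ^(a-1) * Real.exp (-((σ/(2*ω))^(2/(d:ℝ))))) * (Kc * N))
        ?_ ?_ ?_ ?_
      · refine Filter.Eventually.of_forall (fun t => ?_)
        refine Measurable.mul ?_ (Measurable.mul ?_ ?_)
        · exact ENNReal.measurable_ofReal.comp
            ((measurable_id.pow_const (a-1)).mul
              (Real.measurable_exp.comp ((((measurable_id.div_const _).pow_const
                (2/(d:ℝ))).neg))))
        · exact ENNReal.measurable_ofReal.comp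
            ((measurable_id.const_mul _).pow_const γ)
        · exact HeatAux.rearr_measurable.comp ((measurable_id.const_mul _).div_const _)
      · filter_upwards [self_mem_nhdsWithin] with t ht
        filter_upwards [ae_restrict_mem measurableSet_Ioi] with σ hσ
        exact mul_le_mul_right
          (hχbound _ (mul_pos (Real.rpow_pos_of_pos ht _) hσ)) _
      · rw [lintegral_mul_const' _ _ (ENNReal.mul_ne_top hKc_fin hfin.ne)]
        exact (ENNReal.mul_lt_top hJ
          (ENNReal.mul_lt_top hKc_fin.lt_top hfin)).ne
      · filter_upwards [ae_restrict_mem measurableSet_Ioi] with σ hσ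
        have h1 : Tendsto (fun t : ℝ =>
            ENNReal.ofReal ((t^(-((d:ℝ)/2)) * σ)^γ)
              * rearr volume F ((t^(-((d:ℝ)/2)) * σ)/2)) (𝓝[>] (0:ℝ)) (𝓝 0) := by
          have := hχtend.comp (hctend σ hσ)
          exact this
        have h2 := ENNReal.Tendsto.const_mul
          (a := ENNReal.ofReal (σ^(a-1) * Real.exp (-((σ/(2*ω))^(2/(d:ℝ))))))
          h1 (Or.inr ENNReal.ofReal_ne_top)
        rwa [mul_zero] at h2
    refine tendsto_of_tendsto_of_tendsto_of_le_of_le' tendsto_const_nhds hΨ ?_ ?_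
    · exact Filter.Eventually.of_forall (fun t => zero_le)
    · filter_upwards [self_mem_nhdsWithin] with t ht
      exact hmain t ht
end
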